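/- arXiv:1501.04867 — 3 statements merged into one kernel-verified Lean document; each statement's English description precedes it below -/
import Mathlib

section
/- Let G = (V₁, V₂, E) be a finite edge-colored bipartite graph equipped with a probability distribution on its edge set E, and suppose G has the property (**): for every biclique C of G and every three edges (x,y), (x',y), (x,y') of G whose endpoints all lie in C, if (x',y) and (x,y') have the same color a, then the color of (x,y) also equals a. Let (X, Y, A) be the random variables where X is the left end, Y the right end, and A the color of a random edge drawn from the given distribution. Then bcc(G) ≥ 2^{(H(A|X) + H(A|Y) − H(A))/2}. -/
open Finset

noncomputable section

/-- Probability of an event under a distribution on a finite sample space. -/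
def pr {Ω : Type*} [Fintype Ω] (p : Ω → ℝ) (E : Set Ω) : ℝ :=
  ∑ ω, E.indicator p ω

/-- `p` is a probability mass function on the finite sample space `Ω`. -/
def IsPMF {Ω : Type*} [Fintype Ω] (p : Ω → ℝ) : Prop :=
  (∀ ω, 0 ≤ p ω) ∧ ∑ ω, p ω = 1

/-- Shannon entropy (base 2) of a random variable `V` on a finite sample space. -/
def ent {Ω β : Type*} [Fintype Ω] [Fintype β] (p : Ω → ℝ) (V : Ω → β) : ℝ :=
  -∑ v, pr p {ω | V ω = v} * Real.logb 2 (pr p {ω | V ω = v})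

/-- Conditional Shannon entropy (base 2): `H(V | W)`. -/
def condEnt {Ω β γ : Type*} [Fintype Ω] [Fintype β] [Fintype γ]
    (p : Ω → ℝ) (V : Ω → β) (W : Ω → γ) : ℝ :=
  ent p (fun ω => (V ω, W ω)) - ent p W

/-- Mutual information (base 2): `I(V : W)`. -/
def mi {Ω β γ : Type*} [Fintype Ω] [Fintype β] [Fintype γ]
    (p : Ω → ℝ) (V : Ω → β) (W : Ω → γ) : ℝ :=
  ent p V + ent p W - ent p (fun ω => (V ω, W ω))

/-- Conditional mutual information (base 2): `I(V : W | U)`. -/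
def cmi {Ω β γ δ : Type*} [Fintype Ω] [Fintype β] [Fintype γ] [Fintype δ]
    (p : Ω → ℝ) (V : Ω → β) (W : Ω → γ) (U : Ω → δ) : ℝ :=
  ent p (fun ω => (V ω, U ω)) + ent p (fun ω => (W ω, U ω))
    - ent p (fun ω => (V ω, W ω, U ω)) - ent p U

end


section Helpers


variable {Ω : Type*} [Fintype Ω]

lemma pr_eq (p : Ω → ℝ) (S : Set Ω) [DecidablePred (· ∈ S)] :
    pr p S = ∑ ω, if ω ∈ S then p ω else 0 := by
  unfold pr
  exact Finset.sum_congr rfl fun ω _ => by rw [Set.indicator_apply]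

lemma pr_nonneg {p : Ω → ℝ} (hp : ∀ ω, 0 ≤ p ω) (S : Set Ω) : 0 ≤ pr p S := by
  classical
  rw [pr_eq]
  refine Finset.sum_nonneg fun ω _ => ?_
  split
  · exact hp ω
  · exact le_refl 0

lemma pr_mono {p : Ω → ℝ} (hp : ∀ ω, 0 ≤ p ω) {S T : Set Ω} (h : S ⊆ T) :
    pr p S ≤ pr p T := by
  classical
  rw [pr_eq, pr_eq]
  refine Finset.sum_le_sum fun ω _ => ?_
  by_cases hω : ω ∈ S
  · rw [if_pos hω, if_pos (h hω)]
  · rw [if_neg hω]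
    split
    · exact hp ω
    · exact le_refl 0

lemma single_le_pr {p : Ω → ℝ} (hp : ∀ ω, 0 ≤ p ω) {S : Set Ω} {ω : Ω} (hω : ω ∈ S) :
    p ω ≤ pr p S := by
  classical
  rw [pr_eq]
  have h := Finset.single_le_sum (f := fun ω' => if ω' ∈ S then p ω' else 0)
    (fun i _ => by split; exacts [hp i, le_refl 0]) (Finset.mem_univ ω)
  rwa [if_pos hω] at h

lemma pr_pos {p : Ω → ℝ} (hp : ∀ ω, 0 ≤ p ω) {S : Set Ω} {ω : Ω} (hω : ω ∈ S)
    (h0 : p ω ≠ 0) : 0 < pr p S :=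
  lt_of_lt_of_le ((hp ω).lt_of_ne (Ne.symm h0)) (single_le_pr hp hω)

lemma exists_of_pr_ne_zero {p : Ω → ℝ} {S : Set Ω} (h : pr p S ≠ 0) :
    ∃ ω ∈ S, p ω ≠ 0 := by
  classical
  by_contra hc
  push_neg at hc
  apply h
  rw [pr_eq]
  refine Finset.sum_eq_zero fun ω _ => ?_
  by_cases hω : ω ∈ S
  · rw [if_pos hω]; exact hc ω hω
  · rw [if_neg hω]

lemma sum_fiber {ι : Type*} [DecidableEq ι] (p : Ω → ℝ) (g : Ω → ι) (s : Finset ι)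
    (hg : ∀ ω, p ω ≠ 0 → g ω ∈ s) (F : ι → ℝ) :
    ∑ ω, p ω * F (g ω) = ∑ i ∈ s, pr p {ω | g ω = i} * F i := by
  classical
  have hpr : ∀ i : ι, pr p {ω | g ω = i} * F i = ∑ ω, if g ω = i then p ω * F i else 0 := by
    intro i
    rw [pr_eq, Finset.sum_mul]
    refine Finset.sum_congr rfl fun ω _ => ?_
    simp only [Set.mem_setOf_eq]
    split <;> simp
  rw [Finset.sum_congr rfl (fun i _ => hpr i), Finset.sum_comm]
  refine Finset.sum_congr rfl fun ω _ => ?_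
  by_cases hω : p ω = 0
  · simp [hω]
  · rw [Finset.sum_ite_eq s (g ω) (fun i => p ω * F i), if_pos (hg ω hω)]

lemma sum_pr_fiber {ι : Type*} [DecidableEq ι] {p : Ω → ℝ} (hp1 : ∑ ω, p ω = 1)
    (g : Ω → ι) (s : Finset ι) (hg : ∀ ω, p ω ≠ 0 → g ω ∈ s) :
    ∑ i ∈ s, pr p {ω | g ω = i} = 1 := by
  have h := sum_fiber p g s hg (fun _ => 1)
  simpa [hp1] using h.symm

lemma gibbs {ι : Type*} (s : Finset ι) (a b : ι → ℝ) (B : ℝ) (hB : 0 < B)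
    (ha : ∀ i ∈ s, 0 ≤ a i) (hb : ∀ i ∈ s, 0 ≤ b i)
    (hab : ∀ i ∈ s, a i ≠ 0 → b i ≠ 0)
    (hsa : ∑ i ∈ s, a i = 1) (hsb : ∑ i ∈ s, b i ≤ B) :
    ∑ i ∈ s, a i * Real.logb 2 (b i / a i) ≤ Real.logb 2 B := by
  have hlog2 : 0 < Real.log 2 := Real.log_pos one_lt_two
  have key : ∀ i ∈ s, a i * Real.logb 2 (b i / a i)
      ≤ a i * Real.logb 2 B + (b i / B - a i) / Real.log 2 := by
    intro i hi
    rcases eq_or_lt_of_le (ha i hi) with h0 | hpos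
    · rw [← h0]
      have : 0 ≤ (b i / B - 0) / Real.log 2 := by
        apply div_nonneg _ hlog2.le
        simp [div_nonneg (hb i hi) hB.le]
      simpa using this
    · have hbpos : 0 < b i := (hb i hi).lt_of_ne (Ne.symm (hab i hi (ne_of_gt hpos)))
      have h1 : Real.logb 2 (b i / a i) - Real.logb 2 B = Real.logb 2 (b i / (a i * B)) := by
        rw [Real.logb_div (ne_of_gt hbpos) (ne_of_gt hpos),
          Real.logb_div (ne_of_gt hbpos) (by positivity),
          Real.logb_mul (ne_of_gt hpos) (ne_of_gt hB)]
        ring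
      have h2 : Real.logb 2 (b i / (a i * B)) ≤ (b i / (a i * B) - 1) / Real.log 2 := by
        rw [Real.logb]
        gcongr
        exact Real.log_le_sub_one_of_pos (by positivity)
      have h3 : a i * Real.logb 2 (b i / (a i * B)) ≤ (b i / B - a i) / Real.log 2 := by
        calc a i * Real.logb 2 (b i / (a i * B))
            ≤ a i * ((b i / (a i * B) - 1) / Real.log 2) :=
              mul_le_mul_of_nonneg_left h2 hpos.le
          _ = (b i / B - a i) / Real.log 2 := by
              field_simp
      have h4 : a i * Real.logb 2 (b i / a i)
          = a i * Real.logb 2 B + a i * Real.logb 2 (b i / (a i * B)) := by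
        rw [← h1]; ring
      linarith
  calc ∑ i ∈ s, a i * Real.logb 2 (b i / a i)
      ≤ ∑ i ∈ s, (a i * Real.logb 2 B + (b i / B - a i) / Real.log 2) :=
        Finset.sum_le_sum key
    _ = (∑ i ∈ s, a i) * Real.logb 2 B + ((∑ i ∈ s, b i) / B - ∑ i ∈ s, a i) / Real.log 2 := by
        rw [Finset.sum_add_distrib, ← Finset.sum_mul, ← Finset.sum_div, Finset.sum_sub_distrib,
          ← Finset.sum_div]
    _ ≤ Real.logb 2 B := by
        rw [hsa]
        have h5 : (∑ i ∈ s, b i) / B - 1 ≤ 0 := by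
          rw [sub_nonpos, div_le_one hB]
          exact hsb
        have h6 := div_nonpos_of_nonpos_of_nonneg h5 hlog2.le
        linarith


lemma ent_eq {β : Type*} [Fintype β] [DecidableEq β] (p : Ω → ℝ) (V : Ω → β) :
    ent p V = -∑ ω, p ω * Real.logb 2 (pr p {ω' | V ω' = V ω}) := by
  unfold ent
  rw [sum_fiber p V Finset.univ (fun _ _ => Finset.mem_univ _)
    (fun v => Real.logb 2 (pr p {ω' | V ω' = v}))]

lemma sum_le_supp {p : Ω → ℝ} (hp : ∀ ω, 0 ≤ p ω) {f g : Ω → ℝ}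
    (h : ∀ ω, p ω ≠ 0 → f ω ≤ g ω) : ∑ ω, p ω * f ω ≤ ∑ ω, p ω * g ω := by
  refine Finset.sum_le_sum fun ω _ => ?_
  by_cases hω : p ω = 0
  · simp [hω]
  · exact mul_le_mul_of_nonneg_left (h ω hω) (hp ω)

lemma sum_congr_supp {p : Ω → ℝ} {f g : Ω → ℝ}
    (h : ∀ ω, p ω ≠ 0 → f ω = g ω) : ∑ ω, p ω * f ω = ∑ ω, p ω * g ω := by
  refine Finset.sum_congr rfl fun ω _ => ?_
  by_cases hω : p ω = 0
  · simp [hω]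
  · rw [h ω hω]


end Helpers

theorem core {V₁ V₂ κ : Type*} [Fintype V₁] [Fintype V₂] [Fintype κ]
    {t : ℕ} (ht : 0 < t)
    (p : V₁ × V₂ → ℝ) (hp0 : ∀ ω, 0 ≤ p ω) (hp1 : ∑ ω, p ω = 1)
    (c : V₁ × V₂ → κ) (Z : V₁ × V₂ → Fin t)
    (R : Fin t → κ → Finset V₁) (Cs : Fin t → κ → Finset V₂)
    (hmemR : ∀ ω, p ω ≠ 0 → ω.1 ∈ R (Z ω) (c ω))
    (hmemC : ∀ ω, p ω ≠ 0 → ω.2 ∈ Cs (Z ω) (c ω))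
    (huniq : ∀ z a b x y, x ∈ R z a → x ∈ R z b → y ∈ Cs z a → y ∈ Cs z b → a = b) :
    condEnt p c Prod.fst + condEnt p c Prod.snd - ent p c ≤ 2 * Real.logb 2 t := by
  classical
  have htR : (0:ℝ) < (t:ℝ) := by exact_mod_cast ht
  -- master rewrite
  have hm : condEnt p c Prod.fst + condEnt p c Prod.snd - ent p c
      = ∑ ω, p ω * (Real.logb 2 (pr p {ω' | ω'.1 = ω.1})
          + Real.logb 2 (pr p {ω' | ω'.2 = ω.2})
          + Real.logb 2 (pr p {ω' | c ω' = c ω})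
          - Real.logb 2 (pr p {ω' | (c ω', ω'.1) = (c ω, ω.1)})
          - Real.logb 2 (pr p {ω' | (c ω', ω'.2) = (c ω, ω.2)})) := by
    unfold condEnt
    rw [ent_eq p (fun ω => (c ω, Prod.fst ω)), ent_eq p (fun ω => (c ω, Prod.snd ω)),
      ent_eq p Prod.fst, ent_eq p Prod.snd, ent_eq p c]
    simp only [mul_add, mul_sub, Finset.sum_add_distrib, Finset.sum_sub_distrib]
    ring
  rw [hm]
  -- step 1 : conditioning on Z pointwise
  have step1 : ∑ ω, p ω * (Real.logb 2 (pr p {ω' | ω'.1 = ω.1})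
          + Real.logb 2 (pr p {ω' | ω'.2 = ω.2})
          + Real.logb 2 (pr p {ω' | c ω' = c ω})
          - Real.logb 2 (pr p {ω' | (c ω', ω'.1) = (c ω, ω.1)})
          - Real.logb 2 (pr p {ω' | (c ω', ω'.2) = (c ω, ω.2)}))
      ≤ ∑ ω, p ω * (Real.logb 2 (pr p {ω' | ω'.1 = ω.1})
          + Real.logb 2 (pr p {ω' | ω'.2 = ω.2})
          + Real.logb 2 (pr p {ω' | c ω' = c ω})
          - Real.logb 2 (pr p {ω' | (c ω', Z ω', ω'.1) = (c ω, Z ω, ω.1)})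
          - Real.logb 2 (pr p {ω' | (ω'.2, Z ω', c ω') = (ω.2, Z ω, c ω)})) := by
    refine sum_le_supp hp0 (fun ω hω => ?_)
    have h1 : 0 < pr p {ω' | (c ω', Z ω', ω'.1) = (c ω, Z ω, ω.1)} :=
      pr_pos hp0 (by simp only [Set.mem_setOf_eq]) hω
    have h2 : pr p {ω' | (c ω', Z ω', ω'.1) = (c ω, Z ω, ω.1)}
        ≤ pr p {ω' | (c ω', ω'.1) = (c ω, ω.1)} :=
      pr_mono hp0 (fun ω' h => by
        simp only [Set.mem_setOf_eq, Prod.mk.injEq] at h ⊢; tauto)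
    have h3 : 0 < pr p {ω' | (ω'.2, Z ω', c ω') = (ω.2, Z ω, c ω)} :=
      pr_pos hp0 (by simp only [Set.mem_setOf_eq]) hω
    have h4 : pr p {ω' | (ω'.2, Z ω', c ω') = (ω.2, Z ω, c ω)}
        ≤ pr p {ω' | (c ω', ω'.2) = (c ω, ω.2)} :=
      pr_mono hp0 (fun ω' h => by
        simp only [Set.mem_setOf_eq, Prod.mk.injEq] at h ⊢; tauto)
    have h5 := Real.logb_le_logb_of_le (b := 2) one_lt_two h1 h2
    have h6 := Real.logb_le_logb_of_le (b := 2) one_lt_two h3 h4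
    linarith
  refine le_trans step1 ?_
  -- split into five pieces
  have split : ∑ ω, p ω * (Real.logb 2 (pr p {ω' | ω'.1 = ω.1})
          + Real.logb 2 (pr p {ω' | ω'.2 = ω.2})
          + Real.logb 2 (pr p {ω' | c ω' = c ω})
          - Real.logb 2 (pr p {ω' | (c ω', Z ω', ω'.1) = (c ω, Z ω, ω.1)})
          - Real.logb 2 (pr p {ω' | (ω'.2, Z ω', c ω') = (ω.2, Z ω, c ω)}))
      = (∑ ω, p ω * (Real.logb 2 (pr p {ω' | ω'.1 = ω.1})
            - Real.logb 2 (pr p {ω' | (ω'.1, Z ω') = (ω.1, Z ω)})))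
        + (∑ ω, p ω * (Real.logb 2 (pr p {ω' | ω'.2 = ω.2})
            - Real.logb 2 (pr p {ω' | (ω'.2, Z ω') = (ω.2, Z ω)})))
        + ((∑ ω, p ω * (Real.logb 2 (pr p {ω' | (ω'.1, Z ω') = (ω.1, Z ω)})
            + Real.logb 2 (pr p {ω' | (c ω', Z ω') = (c ω, Z ω)})
            - Real.logb 2 (pr p {ω' | (c ω', Z ω', ω'.1) = (c ω, Z ω, ω.1)})
            - Real.logb 2 (pr p {ω' | Z ω' = Z ω ∧ ω'.1 ∈ R (Z ω) (c ω)})))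
          + (∑ ω, p ω * (Real.logb 2 (pr p {ω' | (ω'.2, Z ω') = (ω.2, Z ω)})
            + Real.logb 2 (pr p {ω' | Z ω' = Z ω ∧ ω'.1 ∈ R (Z ω) (c ω)})
            - Real.logb 2 (pr p {ω' | (ω'.2, Z ω', c ω') = (ω.2, Z ω, c ω)})
            - Real.logb 2 (pr p {ω' | Z ω' = Z ω})))
          + (∑ ω, p ω * (Real.logb 2 (pr p {ω' | c ω' = c ω})
            + Real.logb 2 (pr p {ω' | Z ω' = Z ω})
            - Real.logb 2 (pr p {ω' | (c ω', Z ω') = (c ω, Z ω)})))) := by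
    simp only [mul_add, mul_sub, Finset.sum_add_distrib, Finset.sum_sub_distrib]
    ring
  rw [split]
  have hXZ : ∑ ω, p ω * (Real.logb 2 (pr p {ω' | ω'.1 = ω.1})
      - Real.logb 2 (pr p {ω' | (ω'.1, Z ω') = (ω.1, Z ω)})) ≤ Real.logb 2 t := by
    have hsa := sum_pr_fiber hp1 (fun ω => (ω.1, Z ω)) Finset.univ (fun _ _ => Finset.mem_univ _)
    have hsb : ∑ i : V₁ × Fin t, pr p {ω' | ω'.1 = i.1} ≤ (t : ℝ) := by
      rw [Fintype.sum_prod_type]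
      have hz : ∀ x : V₁, ∑ _z : Fin t, pr p {ω' | ω'.1 = x} = (t : ℝ) * pr p {ω' | ω'.1 = x} := by
        intro x
        rw [Finset.sum_const, Finset.card_univ, Fintype.card_fin, nsmul_eq_mul]
      rw [Finset.sum_congr rfl (fun x _ => hz x), ← Finset.mul_sum,
        sum_pr_fiber hp1 (fun ω => ω.1) Finset.univ (fun _ _ => Finset.mem_univ _), mul_one]
    calc ∑ ω, p ω * (Real.logb 2 (pr p {ω' | ω'.1 = ω.1})
          - Real.logb 2 (pr p {ω' | (ω'.1, Z ω') = (ω.1, Z ω)}))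
        = ∑ ω, p ω * Real.logb 2 (pr p {ω' | ω'.1 = ω.1}
            / pr p {ω' | (ω'.1, Z ω') = (ω.1, Z ω)}) := by
          refine sum_congr_supp (fun ω hω => ?_)
          have h1 : 0 < pr p {ω' | (ω'.1, Z ω') = (ω.1, Z ω)} := pr_pos hp0 rfl hω
          have h2 : 0 < pr p {ω' | ω'.1 = ω.1} := pr_pos hp0 rfl hω
          rw [Real.logb_div (ne_of_gt h2) (ne_of_gt h1)]
      _ = ∑ i ∈ Finset.univ, pr p {ω | (ω.1, Z ω) = i}
            * Real.logb 2 (pr p {ω' | ω'.1 = i.1} / pr p {ω' | (ω'.1, Z ω') = i}) :=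
          sum_fiber p (fun ω => (ω.1, Z ω)) Finset.univ (fun _ _ => Finset.mem_univ _)
            (fun i => Real.logb 2 (pr p {ω' | ω'.1 = i.1} / pr p {ω' | (ω'.1, Z ω') = i}))
      _ ≤ Real.logb 2 t := by
          refine gibbs Finset.univ (fun i => pr p {ω | (ω.1, Z ω) = i})
            (fun i => pr p {ω' | ω'.1 = i.1}) t htR (fun i _ => pr_nonneg hp0 _)
            (fun i _ => pr_nonneg hp0 _) (fun i _ ha => ?_) hsa hsb
          intro hb0
          apply ha
          have hmono : pr p {ω | (ω.1, Z ω) = i} ≤ pr p {ω' | ω'.1 = i.1} :=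
            pr_mono hp0 (fun ω' h => congrArg Prod.fst h)
          exact le_antisymm (hb0 ▸ hmono) (pr_nonneg hp0 _)
  have hYZ : ∑ ω, p ω * (Real.logb 2 (pr p {ω' | ω'.2 = ω.2})
      - Real.logb 2 (pr p {ω' | (ω'.2, Z ω') = (ω.2, Z ω)})) ≤ Real.logb 2 t := by
    have hsa := sum_pr_fiber hp1 (fun ω => (ω.2, Z ω)) Finset.univ (fun _ _ => Finset.mem_univ _)
    have hsb : ∑ i : V₂ × Fin t, pr p {ω' | ω'.2 = i.1} ≤ (t : ℝ) := by
      rw [Fintype.sum_prod_type]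
      have hz : ∀ y : V₂, ∑ _z : Fin t, pr p {ω' | ω'.2 = y} = (t : ℝ) * pr p {ω' | ω'.2 = y} := by
        intro y
        rw [Finset.sum_const, Finset.card_univ, Fintype.card_fin, nsmul_eq_mul]
      rw [Finset.sum_congr rfl (fun y _ => hz y), ← Finset.mul_sum,
        sum_pr_fiber hp1 (fun ω => ω.2) Finset.univ (fun _ _ => Finset.mem_univ _), mul_one]
    calc ∑ ω, p ω * (Real.logb 2 (pr p {ω' | ω'.2 = ω.2})
          - Real.logb 2 (pr p {ω' | (ω'.2, Z ω') = (ω.2, Z ω)}))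
        = ∑ ω, p ω * Real.logb 2 (pr p {ω' | ω'.2 = ω.2}
            / pr p {ω' | (ω'.2, Z ω') = (ω.2, Z ω)}) := by
          refine sum_congr_supp (fun ω hω => ?_)
          have h1 : 0 < pr p {ω' | (ω'.2, Z ω') = (ω.2, Z ω)} := pr_pos hp0 rfl hω
          have h2 : 0 < pr p {ω' | ω'.2 = ω.2} := pr_pos hp0 rfl hω
          rw [Real.logb_div (ne_of_gt h2) (ne_of_gt h1)]
      _ = ∑ i ∈ Finset.univ, pr p {ω | (ω.2, Z ω) = i}
            * Real.logb 2 (pr p {ω' | ω'.2 = i.1} / pr p {ω' | (ω'.2, Z ω') = i}) :=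
          sum_fiber p (fun ω => (ω.2, Z ω)) Finset.univ (fun _ _ => Finset.mem_univ _)
            (fun i => Real.logb 2 (pr p {ω' | ω'.2 = i.1} / pr p {ω' | (ω'.2, Z ω') = i}))
      _ ≤ Real.logb 2 t := by
          refine gibbs Finset.univ (fun i => pr p {ω | (ω.2, Z ω) = i})
            (fun i => pr p {ω' | ω'.2 = i.1}) t htR (fun i _ => pr_nonneg hp0 _)
            (fun i _ => pr_nonneg hp0 _) (fun i _ ha => ?_) hsa hsb
          intro hb0
          apply ha
          have hmono : pr p {ω | (ω.2, Z ω) = i} ≤ pr p {ω' | ω'.2 = i.1} :=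
            pr_mono hp0 (fun ω' h => congrArg Prod.fst h)
          exact le_antisymm (hb0 ▸ hmono) (pr_nonneg hp0 _)
  have hSd1 : ∑ ω, p ω * (Real.logb 2 (pr p {ω' | (ω'.1, Z ω') = (ω.1, Z ω)})
      + Real.logb 2 (pr p {ω' | (c ω', Z ω') = (c ω, Z ω)})
      - Real.logb 2 (pr p {ω' | (c ω', Z ω', ω'.1) = (c ω, Z ω, ω.1)})
      - Real.logb 2 (pr p {ω' | Z ω' = Z ω ∧ ω'.1 ∈ R (Z ω) (c ω)})) ≤ 0 := by
    set s₁ : Finset (κ × Fin t × V₁) :=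
      Finset.univ.filter (fun i => i.2.2 ∈ R i.2.1 i.1) with hs₁
    have hg : ∀ ω : V₁ × V₂, p ω ≠ 0 → (c ω, Z ω, ω.1) ∈ s₁ := by
      intro ω hω
      rw [hs₁, Finset.mem_filter]
      exact ⟨Finset.mem_univ _, hmemR ω hω⟩
    have key1 : ∀ a z, (∑ x, if x ∈ R z a then pr p {ω' | (ω'.1, Z ω') = (x, z)} else 0)
        = pr p {ω' | Z ω' = z ∧ ω'.1 ∈ R z a} := by
      intro a z
      rw [pr_eq]
      have hstep : ∀ x : V₁, (if x ∈ R z a then pr p {ω' | (ω'.1, Z ω') = (x, z)} else 0)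
          = ∑ ω', if x = ω'.1 then (if Z ω' = z ∧ ω'.1 ∈ R z a then p ω' else 0) else 0 := by
        intro x
        by_cases hx : x ∈ R z a
        · rw [if_pos hx, pr_eq]
          refine Finset.sum_congr rfl fun ω' _ => ?_
          by_cases h1 : x = ω'.1
          · subst h1
            simp only [Set.mem_setOf_eq, Prod.mk.injEq, if_pos rfl]
            by_cases h2 : Z ω' = z
            · simp [h2, hx]
            · simp [h2]
          · rw [if_neg h1, if_neg (by
              simp only [Set.mem_setOf_eq, Prod.mk.injEq]
              intro h
              exact h1 h.1.symm)]
        · rw [if_neg hx]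
          symm
          refine Finset.sum_eq_zero fun ω' _ => ?_
          by_cases h1 : x = ω'.1
          · subst h1
            rw [if_pos rfl, if_neg (fun h => hx h.2)]
          · rw [if_neg h1]
      rw [Finset.sum_congr rfl (fun x _ => hstep x), Finset.sum_comm]
      refine Finset.sum_congr rfl fun ω' _ => ?_
      rw [Finset.sum_ite_eq' Finset.univ ω'.1
        (fun _ => if Z ω' = z ∧ ω'.1 ∈ R z a then p ω' else 0), if_pos (Finset.mem_univ _)]
      simp only [Set.mem_setOf_eq]
    have inner : ∀ a z, (∑ x, if x ∈ R z a then
          pr p {ω' | (ω'.1, Z ω') = (x, z)} * pr p {ω' | (c ω', Z ω') = (a, z)}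
            / pr p {ω' | Z ω' = z ∧ ω'.1 ∈ R z a} else 0)
        ≤ pr p {ω' | (c ω', Z ω') = (a, z)} := by
      intro a z
      by_cases hPR : pr p {ω' | Z ω' = z ∧ ω'.1 ∈ R z a} = 0
      · refine le_trans (le_of_eq (Finset.sum_eq_zero fun x _ => ?_)) (pr_nonneg hp0 _)
        by_cases hx : x ∈ R z a
        · rw [if_pos hx]
          have hmono : pr p {ω' | (ω'.1, Z ω') = (x, z)}
              ≤ pr p {ω' | Z ω' = z ∧ ω'.1 ∈ R z a} := by
            refine pr_mono hp0 (fun ω' h => ?_)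
            exact ⟨congrArg Prod.snd h, (congrArg Prod.fst h).symm ▸ hx⟩
          have h0 : pr p {ω' | (ω'.1, Z ω') = (x, z)} = 0 :=
            le_antisymm (hPR ▸ hmono) (pr_nonneg hp0 _)
          rw [h0, zero_mul, zero_div]
        · rw [if_neg hx]
      · have heq : (∑ x, if x ∈ R z a then
            pr p {ω' | (ω'.1, Z ω') = (x, z)} * pr p {ω' | (c ω', Z ω') = (a, z)}
              / pr p {ω' | Z ω' = z ∧ ω'.1 ∈ R z a} else 0)
            = (∑ x, if x ∈ R z a then pr p {ω' | (ω'.1, Z ω') = (x, z)} else 0)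
              * (pr p {ω' | (c ω', Z ω') = (a, z)} / pr p {ω' | Z ω' = z ∧ ω'.1 ∈ R z a}) := by
          rw [Finset.sum_mul]
          refine Finset.sum_congr rfl fun x _ => ?_
          split
          · rw [mul_div_assoc]
          · rw [zero_mul]
        rw [heq, key1 a z, mul_comm, div_mul_cancel₀ _ hPR]
    have hsb : ∑ i ∈ s₁, pr p {ω' | (ω'.1, Z ω') = (i.2.2, i.2.1)}
        * pr p {ω' | (c ω', Z ω') = (i.1, i.2.1)}
        / pr p {ω' | Z ω' = i.2.1 ∧ ω'.1 ∈ R i.2.1 i.1} ≤ 1 := by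
      rw [hs₁, Finset.sum_filter, Fintype.sum_prod_type]
      have hflat : ∀ a : κ, (∑ zx : Fin t × V₁, if (a, zx).2.2 ∈ R (a, zx).2.1 (a, zx).1 then
            pr p {ω' | (ω'.1, Z ω') = ((a, zx).2.2, (a, zx).2.1)}
            * pr p {ω' | (c ω', Z ω') = ((a, zx).1, (a, zx).2.1)}
            / pr p {ω' | Z ω' = (a, zx).2.1 ∧ ω'.1 ∈ R (a, zx).2.1 (a, zx).1} else 0)
          = ∑ z : Fin t, ∑ x : V₁, if x ∈ R z a then
            pr p {ω' | (ω'.1, Z ω') = (x, z)} * pr p {ω' | (c ω', Z ω') = (a, z)}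
            / pr p {ω' | Z ω' = z ∧ ω'.1 ∈ R z a} else 0 := by
        intro a
        rw [Fintype.sum_prod_type]
      rw [Finset.sum_congr rfl (fun a _ => hflat a)]
      calc ∑ a : κ, ∑ z : Fin t, ∑ x : V₁, (if x ∈ R z a then
            pr p {ω' | (ω'.1, Z ω') = (x, z)} * pr p {ω' | (c ω', Z ω') = (a, z)}
            / pr p {ω' | Z ω' = z ∧ ω'.1 ∈ R z a} else 0)
          ≤ ∑ a : κ, ∑ z : Fin t, pr p {ω' | (c ω', Z ω') = (a, z)} :=
            Finset.sum_le_sum (fun a _ => Finset.sum_le_sum (fun z _ => inner a z))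
        _ = 1 := by
            rw [← Fintype.sum_prod_type (f := fun i : κ × Fin t => pr p {ω' | (c ω', Z ω') = i})]
            exact sum_pr_fiber hp1 (fun ω => (c ω, Z ω)) Finset.univ (fun _ _ => Finset.mem_univ _)
    have hsa := sum_pr_fiber hp1 (fun ω => (c ω, Z ω, ω.1)) s₁ hg
    have hcalc : ∑ ω, p ω * (Real.logb 2 (pr p {ω' | (ω'.1, Z ω') = (ω.1, Z ω)})
        + Real.logb 2 (pr p {ω' | (c ω', Z ω') = (c ω, Z ω)})
        - Real.logb 2 (pr p {ω' | (c ω', Z ω', ω'.1) = (c ω, Z ω, ω.1)})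
        - Real.logb 2 (pr p {ω' | Z ω' = Z ω ∧ ω'.1 ∈ R (Z ω) (c ω)}))
        = ∑ i ∈ s₁, pr p {ω | (c ω, Z ω, ω.1) = i}
          * Real.logb 2 ((pr p {ω' | (ω'.1, Z ω') = (i.2.2, i.2.1)}
              * pr p {ω' | (c ω', Z ω') = (i.1, i.2.1)}
              / pr p {ω' | Z ω' = i.2.1 ∧ ω'.1 ∈ R i.2.1 i.1})
            / pr p {ω' | (c ω', Z ω', ω'.1) = i}) := by
      rw [← sum_fiber p (fun ω => (c ω, Z ω, ω.1)) s₁ hg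
        (fun i => Real.logb 2 ((pr p {ω' | (ω'.1, Z ω') = (i.2.2, i.2.1)}
              * pr p {ω' | (c ω', Z ω') = (i.1, i.2.1)}
              / pr p {ω' | Z ω' = i.2.1 ∧ ω'.1 ∈ R i.2.1 i.1})
            / pr p {ω' | (c ω', Z ω', ω'.1) = i}))]
      refine sum_congr_supp (fun ω hω => ?_)
      have h1 : 0 < pr p {ω' | (ω'.1, Z ω') = (ω.1, Z ω)} := pr_pos hp0 rfl hω
      have h2 : 0 < pr p {ω' | (c ω', Z ω') = (c ω, Z ω)} := pr_pos hp0 rfl hω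
      have h3 : 0 < pr p {ω' | (c ω', Z ω', ω'.1) = (c ω, Z ω, ω.1)} := pr_pos hp0 rfl hω
      have h4 : 0 < pr p {ω' | Z ω' = Z ω ∧ ω'.1 ∈ R (Z ω) (c ω)} :=
        pr_pos hp0 ⟨rfl, hmemR ω hω⟩ hω
      rw [Real.logb_div (by positivity) (ne_of_gt h3),
        Real.logb_div (by positivity) (ne_of_gt h4),
        Real.logb_mul (ne_of_gt h1) (ne_of_gt h2)]
      ring
    rw [hcalc, ← Real.logb_one (b := 2)]
    refine gibbs s₁ (fun i => pr p {ω | (c ω, Z ω, ω.1) = i})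
      (fun i => pr p {ω' | (ω'.1, Z ω') = (i.2.2, i.2.1)}
        * pr p {ω' | (c ω', Z ω') = (i.1, i.2.1)}
        / pr p {ω' | Z ω' = i.2.1 ∧ ω'.1 ∈ R i.2.1 i.1}) 1 one_pos
      (fun i _ => pr_nonneg hp0 _)
      (fun i _ => div_nonneg (mul_nonneg (pr_nonneg hp0 _) (pr_nonneg hp0 _)) (pr_nonneg hp0 _))
      (fun i hi ha => ?_) hsa hsb
    obtain ⟨ω, hgω, hpω⟩ := exists_of_pr_ne_zero ha
    have hgω' : (c ω, Z ω, ω.1) = i := hgω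
    subst hgω'
    have h1 : 0 < pr p {ω' | (ω'.1, Z ω') = (ω.1, Z ω)} := pr_pos hp0 rfl hpω
    have h2 : 0 < pr p {ω' | (c ω', Z ω') = (c ω, Z ω)} := pr_pos hp0 rfl hpω
    have h4 : 0 < pr p {ω' | Z ω' = Z ω ∧ ω'.1 ∈ R (Z ω) (c ω)} :=
      pr_pos hp0 ⟨rfl, hmemR ω hpω⟩ hpω
    positivity
  have hSd2 : ∑ ω, p ω * (Real.logb 2 (pr p {ω' | (ω'.2, Z ω') = (ω.2, Z ω)})
      + Real.logb 2 (pr p {ω' | Z ω' = Z ω ∧ ω'.1 ∈ R (Z ω) (c ω)})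
      - Real.logb 2 (pr p {ω' | (ω'.2, Z ω', c ω') = (ω.2, Z ω, c ω)})
      - Real.logb 2 (pr p {ω' | Z ω' = Z ω})) ≤ 0 := by
    set s₂ : Finset (V₂ × Fin t × κ) :=
      Finset.univ.filter (fun i => i.1 ∈ Cs i.2.1 i.2.2) with hs₂
    have hg : ∀ ω : V₁ × V₂, p ω ≠ 0 → (ω.2, Z ω, c ω) ∈ s₂ := by
      intro ω hω
      rw [hs₂, Finset.mem_filter]
      exact ⟨Finset.mem_univ _, hmemC ω hω⟩
    have hdis : ∀ (y : V₂) (z : Fin t),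
        (∑ a : κ, if y ∈ Cs z a then pr p {ω' | Z ω' = z ∧ ω'.1 ∈ R z a} else 0)
        ≤ pr p {ω' | Z ω' = z} := by
      intro y z
      have hPR : ∀ a : κ, (if y ∈ Cs z a then pr p {ω' | Z ω' = z ∧ ω'.1 ∈ R z a} else 0)
          = ∑ ω', if y ∈ Cs z a ∧ Z ω' = z ∧ ω'.1 ∈ R z a then p ω' else 0 := by
        intro a
        by_cases hy : y ∈ Cs z a
        · rw [if_pos hy, pr_eq]
          refine Finset.sum_congr rfl fun ω' _ => ?_
          simp only [Set.mem_setOf_eq, hy, true_and]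
        · rw [if_neg hy]
          symm
          exact Finset.sum_eq_zero fun ω' _ => if_neg (fun h => hy h.1)
      rw [Finset.sum_congr rfl (fun a _ => hPR a), Finset.sum_comm, pr_eq]
      refine Finset.sum_le_sum fun ω' _ => ?_
      by_cases hz : Z ω' = z
      · have hcard : (Finset.univ.filter
            (fun a : κ => y ∈ Cs z a ∧ Z ω' = z ∧ ω'.1 ∈ R z a)).card ≤ 1 := by
          refine Finset.card_le_one.mpr (fun a ha b hb => ?_)
          simp only [Finset.mem_filter] at ha hb
          exact huniq z a b ω'.1 y ha.2.2.2 hb.2.2.2 ha.2.1 hb.2.1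
        have hcardR : ((Finset.univ.filter
            (fun a : κ => y ∈ Cs z a ∧ Z ω' = z ∧ ω'.1 ∈ R z a)).card : ℝ) ≤ 1 := by
          exact_mod_cast hcard
        calc (∑ a : κ, if y ∈ Cs z a ∧ Z ω' = z ∧ ω'.1 ∈ R z a then p ω' else 0)
            = ∑ _a ∈ Finset.univ.filter
                (fun a : κ => y ∈ Cs z a ∧ Z ω' = z ∧ ω'.1 ∈ R z a), p ω' :=
              (Finset.sum_filter _ _).symm
          _ = ((Finset.univ.filter
                (fun a : κ => y ∈ Cs z a ∧ Z ω' = z ∧ ω'.1 ∈ R z a)).card : ℕ) • p ω' :=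
              Finset.sum_const _
          _ ≤ p ω' := by
              rw [nsmul_eq_mul]
              exact mul_le_of_le_one_left (hp0 ω') hcardR
          _ = if ω' ∈ {ω'' | Z ω'' = z} then p ω' else 0 :=
              (if_pos (show ω' ∈ {ω'' | Z ω'' = z} from hz)).symm
      · rw [Finset.sum_eq_zero (fun a _ => if_neg (fun h => hz h.2.1))]
        exact le_of_eq (if_neg (show ω' ∉ {ω'' | Z ω'' = z} from hz)).symm
    have inner : ∀ (y : V₂) (z : Fin t), (∑ a : κ, if y ∈ Cs z a then
          pr p {ω' | (ω'.2, Z ω') = (y, z)} * pr p {ω' | Z ω' = z ∧ ω'.1 ∈ R z a}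
            / pr p {ω' | Z ω' = z} else 0)
        ≤ pr p {ω' | (ω'.2, Z ω') = (y, z)} := by
      intro y z
      by_cases hPz : pr p {ω' | Z ω' = z} = 0
      · refine le_trans (le_of_eq (Finset.sum_eq_zero fun a _ => ?_)) (pr_nonneg hp0 _)
        by_cases hy : y ∈ Cs z a
        · rw [if_pos hy]
          have hmono : pr p {ω' | Z ω' = z ∧ ω'.1 ∈ R z a} ≤ pr p {ω' | Z ω' = z} :=
            pr_mono hp0 (fun ω' h => h.1)
          have h0 : pr p {ω' | Z ω' = z ∧ ω'.1 ∈ R z a} = 0 :=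
            le_antisymm (hPz ▸ hmono) (pr_nonneg hp0 _)
          rw [h0, mul_zero, zero_div]
        · rw [if_neg hy]
      · have heq : (∑ a : κ, if y ∈ Cs z a then
            pr p {ω' | (ω'.2, Z ω') = (y, z)} * pr p {ω' | Z ω' = z ∧ ω'.1 ∈ R z a}
              / pr p {ω' | Z ω' = z} else 0)
            = (∑ a : κ, if y ∈ Cs z a then pr p {ω' | Z ω' = z ∧ ω'.1 ∈ R z a} else 0)
              * (pr p {ω' | (ω'.2, Z ω') = (y, z)} / pr p {ω' | Z ω' = z}) := by
          rw [Finset.sum_mul]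
          refine Finset.sum_congr rfl fun a _ => ?_
          split
          · ring
          · rw [zero_mul]
        rw [heq]
        calc (∑ a : κ, if y ∈ Cs z a then pr p {ω' | Z ω' = z ∧ ω'.1 ∈ R z a} else 0)
              * (pr p {ω' | (ω'.2, Z ω') = (y, z)} / pr p {ω' | Z ω' = z})
            ≤ pr p {ω' | Z ω' = z} * (pr p {ω' | (ω'.2, Z ω') = (y, z)} / pr p {ω' | Z ω' = z}) :=
              mul_le_mul_of_nonneg_right (hdis y z)
                (div_nonneg (pr_nonneg hp0 _) (pr_nonneg hp0 _))
          _ = pr p {ω' | (ω'.2, Z ω') = (y, z)} := by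
              rw [mul_comm, div_mul_cancel₀ _ hPz]
    have hsb : ∑ i ∈ s₂, pr p {ω' | (ω'.2, Z ω') = (i.1, i.2.1)}
        * pr p {ω' | Z ω' = i.2.1 ∧ ω'.1 ∈ R i.2.1 i.2.2}
        / pr p {ω' | Z ω' = i.2.1} ≤ 1 := by
      rw [hs₂, Finset.sum_filter, Fintype.sum_prod_type]
      have hflat : ∀ y : V₂, (∑ za : Fin t × κ, if (y, za).1 ∈ Cs (y, za).2.1 (y, za).2.2 then
            pr p {ω' | (ω'.2, Z ω') = ((y, za).1, (y, za).2.1)}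
            * pr p {ω' | Z ω' = (y, za).2.1 ∧ ω'.1 ∈ R (y, za).2.1 (y, za).2.2}
            / pr p {ω' | Z ω' = (y, za).2.1} else 0)
          = ∑ z : Fin t, ∑ a : κ, if y ∈ Cs z a then
            pr p {ω' | (ω'.2, Z ω') = (y, z)} * pr p {ω' | Z ω' = z ∧ ω'.1 ∈ R z a}
            / pr p {ω' | Z ω' = z} else 0 := by
        intro y
        rw [Fintype.sum_prod_type]
      rw [Finset.sum_congr rfl (fun y _ => hflat y)]
      calc ∑ y : V₂, ∑ z : Fin t, ∑ a : κ, (if y ∈ Cs z a then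
            pr p {ω' | (ω'.2, Z ω') = (y, z)} * pr p {ω' | Z ω' = z ∧ ω'.1 ∈ R z a}
            / pr p {ω' | Z ω' = z} else 0)
          ≤ ∑ y : V₂, ∑ z : Fin t, pr p {ω' | (ω'.2, Z ω') = (y, z)} :=
            Finset.sum_le_sum (fun y _ => Finset.sum_le_sum (fun z _ => inner y z))
        _ = 1 := by
            rw [← Fintype.sum_prod_type (f := fun i : V₂ × Fin t => pr p {ω' | (ω'.2, Z ω') = i})]
            exact sum_pr_fiber hp1 (fun ω => (ω.2, Z ω)) Finset.univ (fun _ _ => Finset.mem_univ _)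
    have hsa := sum_pr_fiber hp1 (fun ω => (ω.2, Z ω, c ω)) s₂ hg
    have hcalc : ∑ ω, p ω * (Real.logb 2 (pr p {ω' | (ω'.2, Z ω') = (ω.2, Z ω)})
        + Real.logb 2 (pr p {ω' | Z ω' = Z ω ∧ ω'.1 ∈ R (Z ω) (c ω)})
        - Real.logb 2 (pr p {ω' | (ω'.2, Z ω', c ω') = (ω.2, Z ω, c ω)})
        - Real.logb 2 (pr p {ω' | Z ω' = Z ω}))
        = ∑ i ∈ s₂, pr p {ω | (ω.2, Z ω, c ω) = i}
          * Real.logb 2 ((pr p {ω' | (ω'.2, Z ω') = (i.1, i.2.1)}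
              * pr p {ω' | Z ω' = i.2.1 ∧ ω'.1 ∈ R i.2.1 i.2.2}
              / pr p {ω' | Z ω' = i.2.1})
            / pr p {ω' | (ω'.2, Z ω', c ω') = i}) := by
      rw [← sum_fiber p (fun ω => (ω.2, Z ω, c ω)) s₂ hg
        (fun i => Real.logb 2 ((pr p {ω' | (ω'.2, Z ω') = (i.1, i.2.1)}
              * pr p {ω' | Z ω' = i.2.1 ∧ ω'.1 ∈ R i.2.1 i.2.2}
              / pr p {ω' | Z ω' = i.2.1})
            / pr p {ω' | (ω'.2, Z ω', c ω') = i}))]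
      refine sum_congr_supp (fun ω hω => ?_)
      have h1 : 0 < pr p {ω' | (ω'.2, Z ω') = (ω.2, Z ω)} := pr_pos hp0 rfl hω
      have h2 : 0 < pr p {ω' | Z ω' = Z ω ∧ ω'.1 ∈ R (Z ω) (c ω)} :=
        pr_pos hp0 ⟨rfl, hmemR ω hω⟩ hω
      have h3 : 0 < pr p {ω' | (ω'.2, Z ω', c ω') = (ω.2, Z ω, c ω)} := pr_pos hp0 rfl hω
      have h4 : 0 < pr p {ω' | Z ω' = Z ω} := pr_pos hp0 rfl hω
      rw [Real.logb_div (by positivity) (ne_of_gt h3),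
        Real.logb_div (by positivity) (ne_of_gt h4),
        Real.logb_mul (ne_of_gt h1) (ne_of_gt h2)]
      ring
    rw [hcalc, ← Real.logb_one (b := 2)]
    refine gibbs s₂ (fun i => pr p {ω | (ω.2, Z ω, c ω) = i})
      (fun i => pr p {ω' | (ω'.2, Z ω') = (i.1, i.2.1)}
        * pr p {ω' | Z ω' = i.2.1 ∧ ω'.1 ∈ R i.2.1 i.2.2}
        / pr p {ω' | Z ω' = i.2.1}) 1 one_pos
      (fun i _ => pr_nonneg hp0 _)
      (fun i _ => div_nonneg (mul_nonneg (pr_nonneg hp0 _) (pr_nonneg hp0 _)) (pr_nonneg hp0 _))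
      (fun i hi ha => ?_) hsa hsb
    obtain ⟨ω, hgω, hpω⟩ := exists_of_pr_ne_zero ha
    have hgω' : (ω.2, Z ω, c ω) = i := hgω
    subst hgω'
    have h1 : 0 < pr p {ω' | (ω'.2, Z ω') = (ω.2, Z ω)} := pr_pos hp0 rfl hpω
    have h2 : 0 < pr p {ω' | Z ω' = Z ω ∧ ω'.1 ∈ R (Z ω) (c ω)} :=
      pr_pos hp0 ⟨rfl, hmemR ω hpω⟩ hpω
    have h4 : 0 < pr p {ω' | Z ω' = Z ω} := pr_pos hp0 rfl hpω
    positivity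
  have hSd3 : ∑ ω, p ω * (Real.logb 2 (pr p {ω' | c ω' = c ω})
      + Real.logb 2 (pr p {ω' | Z ω' = Z ω})
      - Real.logb 2 (pr p {ω' | (c ω', Z ω') = (c ω, Z ω)})) ≤ 0 := by
    have hsa := sum_pr_fiber hp1 (fun ω => (c ω, Z ω)) Finset.univ (fun _ _ => Finset.mem_univ _)
    have hsb : ∑ i : κ × Fin t, pr p {ω' | c ω' = i.1} * pr p {ω' | Z ω' = i.2} ≤ (1 : ℝ) := by
      rw [Fintype.sum_prod_type]
      have hz : ∀ a : κ, ∑ z : Fin t, pr p {ω' | c ω' = a} * pr p {ω' | Z ω' = z}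
          = pr p {ω' | c ω' = a} * ∑ z : Fin t, pr p {ω' | Z ω' = z} := by
        intro a; rw [Finset.mul_sum]
      rw [Finset.sum_congr rfl (fun a _ => hz a),
        sum_pr_fiber hp1 (fun ω => Z ω) Finset.univ (fun _ _ => Finset.mem_univ _)]
      simp only [mul_one]
      rw [sum_pr_fiber hp1 (fun ω => c ω) Finset.univ (fun _ _ => Finset.mem_univ _)]
    have hcalc : ∑ ω, p ω * (Real.logb 2 (pr p {ω' | c ω' = c ω})
        + Real.logb 2 (pr p {ω' | Z ω' = Z ω})
        - Real.logb 2 (pr p {ω' | (c ω', Z ω') = (c ω, Z ω)}))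
        = ∑ i ∈ Finset.univ, pr p {ω | (c ω, Z ω) = i}
          * Real.logb 2 ((pr p {ω' | c ω' = i.1} * pr p {ω' | Z ω' = i.2})
            / pr p {ω' | (c ω', Z ω') = i}) := by
      rw [← sum_fiber p (fun ω => (c ω, Z ω)) Finset.univ (fun _ _ => Finset.mem_univ _)
        (fun i => Real.logb 2 ((pr p {ω' | c ω' = i.1} * pr p {ω' | Z ω' = i.2})
            / pr p {ω' | (c ω', Z ω') = i}))]
      refine sum_congr_supp (fun ω hω => ?_)
      have h1 : 0 < pr p {ω' | c ω' = c ω} := pr_pos hp0 rfl hω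
      have h2 : 0 < pr p {ω' | Z ω' = Z ω} := pr_pos hp0 rfl hω
      have h3 : 0 < pr p {ω' | (c ω', Z ω') = (c ω, Z ω)} := pr_pos hp0 rfl hω
      rw [Real.logb_div (by positivity) (ne_of_gt h3), Real.logb_mul (ne_of_gt h1) (ne_of_gt h2)]
    rw [hcalc, ← Real.logb_one (b := 2)]
    refine gibbs Finset.univ (fun i => pr p {ω | (c ω, Z ω) = i})
      (fun i => pr p {ω' | c ω' = i.1} * pr p {ω' | Z ω' = i.2}) 1 one_pos
      (fun i _ => pr_nonneg hp0 _)
      (fun i _ => mul_nonneg (pr_nonneg hp0 _) (pr_nonneg hp0 _))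
      (fun i _ ha => ?_) hsa hsb
    intro hb0
    apply ha
    rcases mul_eq_zero.mp hb0 with h | h
    · have hmono : pr p {ω | (c ω, Z ω) = i} ≤ pr p {ω' | c ω' = i.1} :=
        pr_mono hp0 (fun ω' hh => congrArg Prod.fst hh)
      exact le_antisymm (h ▸ hmono) (pr_nonneg hp0 _)
    · have hmono : pr p {ω | (c ω, Z ω) = i} ≤ pr p {ω' | Z ω' = i.2} :=
        pr_mono hp0 (fun ω' hh => congrArg Prod.snd hh)
      exact le_antisymm (h ▸ hmono) (pr_nonneg hp0 _)
  linarith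

/-- Theorem on biclique coverings: for an edge-colored bipartite graph with property (**)
and a probability distribution on its edges, any biclique covering by `t` bicliques
satisfies `t ≥ 2^((H(A|X) + H(A|Y) - H(A))/2)`, where `X`, `Y`, `A` are the left end,
the right end and the color of a random edge. -/
theorem stmt_17 {V₁ V₂ κ : Type*} [Fintype V₁] [Fintype V₂] [Fintype κ]
    (E : Finset (V₁ × V₂)) (c : V₁ × V₂ → κ)
    (p : V₁ × V₂ → ℝ) (hp : IsPMF p) (hsupp : ∀ e, p e ≠ 0 → e ∈ E)
    (hstar : ∀ (S₁ : Finset V₁) (S₂ : Finset V₂), S₁ ×ˢ S₂ ⊆ E →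
      ∀ x ∈ S₁, ∀ x' ∈ S₁, ∀ y ∈ S₂, ∀ y' ∈ S₂,
        c (x', y) = c (x, y') → c (x, y) = c (x', y))
    (t : ℕ) (C : Fin t → Finset V₁ × Finset V₂)
    (hbic : ∀ i, (C i).1 ×ˢ (C i).2 ⊆ E)
    (hcov : ∀ e ∈ E, ∃ i, e.1 ∈ (C i).1 ∧ e.2 ∈ (C i).2) :
    (2 : ℝ) ^ ((condEnt p c Prod.fst + condEnt p c Prod.snd - ent p c) / 2) ≤ t := by
  classical
  obtain ⟨hp0, hp1⟩ := hp
  have hex : ∃ ω, p ω ≠ 0 := by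
    by_contra h
    push_neg at h
    rw [Finset.sum_eq_zero (fun ω _ => h ω)] at hp1
    exact one_ne_zero hp1.symm
  obtain ⟨ω₀, hω₀⟩ := hex
  have ht : 0 < t := (hcov ω₀ (hsupp ω₀ hω₀)).choose.pos
  set Z : V₁ × V₂ → Fin t := fun ω => if h : ω ∈ E then (hcov ω h).choose else ⟨0, ht⟩ with hZdef
  set R : Fin t → κ → Finset V₁ :=
    fun z a => (C z).1.filter (fun x => ∃ y ∈ (C z).2, c (x, y) = a) with hRdef
  set Cs : Fin t → κ → Finset V₂ :=
    fun z a => (C z).2.filter (fun y => ∃ x ∈ (C z).1, c (x, y) = a) with hCsdef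
  have hkey : ∀ z a x y, x ∈ R z a → y ∈ Cs z a → c (x, y) = a := by
    intro z a x y hx hy
    rw [hRdef] at hx
    rw [hCsdef] at hy
    simp only [Finset.mem_filter] at hx hy
    obtain ⟨hx1, y'', hy''2, hcy''⟩ := hx
    obtain ⟨hy1, x'', hx''1, hcx''⟩ := hy
    have hres := hstar (C z).1 (C z).2 (hbic z) x hx1 x'' hx''1 y hy1 y'' hy''2
      (by rw [hcx'', hcy''])
    rw [hres]
    exact hcx''
  have hmemR : ∀ ω, p ω ≠ 0 → ω.1 ∈ R (Z ω) (c ω) := by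
    intro ω hω
    have hE := hsupp ω hω
    have hZω : Z ω = (hcov ω hE).choose := by rw [hZdef]; exact dif_pos hE
    obtain ⟨h1, h2⟩ := (hcov ω hE).choose_spec
    rw [hZω, hRdef]
    simp only [Finset.mem_filter]
    exact ⟨h1, ω.2, h2, by rw [Prod.mk.eta]⟩
  have hmemC : ∀ ω, p ω ≠ 0 → ω.2 ∈ Cs (Z ω) (c ω) := by
    intro ω hω
    have hE := hsupp ω hω
    have hZω : Z ω = (hcov ω hE).choose := by rw [hZdef]; exact dif_pos hE
    obtain ⟨h1, h2⟩ := (hcov ω hE).choose_spec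
    rw [hZω, hCsdef]
    simp only [Finset.mem_filter]
    exact ⟨h2, ω.1, h1, by rw [Prod.mk.eta]⟩
  have huniq : ∀ z a b x y, x ∈ R z a → x ∈ R z b → y ∈ Cs z a → y ∈ Cs z b → a = b := by
    intro z a b x y h1 h2 h3 h4
    rw [← hkey z a x y h1 h3, hkey z b x y h2 h4]
  have hcore := core ht p hp0 hp1 c Z R Cs hmemR hmemC huniq
  have htR : (0 : ℝ) < (t : ℝ) := by exact_mod_cast ht
  calc (2 : ℝ) ^ ((condEnt p c Prod.fst + condEnt p c Prod.snd - ent p c) / 2)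
      ≤ (2 : ℝ) ^ (Real.logb 2 (t : ℝ)) := by
        apply Real.rpow_le_rpow_of_exponent_le one_le_two
        linarith
    _ = (t : ℝ) := Real.rpow_logb two_pos (by norm_num) htR
end

section
/- Let n, k be positive integers with 2k ≤ n, and let G_{n,k} be the bipartite graph whose left and right vertex sets are both the collection of k-element subsets of {1, …, n}, with an edge between x and y exactly when x and y are disjoint. If the edges of G_{n,k} can be covered by t bicliques, then t² ≥ C(n, 2k) / C(n−k, k)². -/
open Finset

/-- Vertices of the disjointness graph `G_{n,k}`: `k`-element subsets of `{1,…,n}`. -/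
abbrev kSubsets (n k : ℕ) := {s : Finset (Fin n) // s.card = k}

/-- If the edges of the bipartite graph `G_{n,k}` (both sides are `k`-element subsets of
`{1,…,n}`, edges are the disjoint pairs) are covered by `t` bicliques, then
`t² ≥ C(n,2k) / C(n-k,k)²`. -/
theorem stmt_18 (n k : ℕ) (hk : 0 < k) (hkn : 2 * k ≤ n) (t : ℕ)
    (C : Fin t → Finset (kSubsets n k) × Finset (kSubsets n k))
    (hbic : ∀ i, ∀ x ∈ (C i).1, ∀ y ∈ (C i).2, Disjoint x.1 y.1)
    (hcov : ∀ x y : kSubsets n k, Disjoint x.1 y.1 →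
      ∃ i, x ∈ (C i).1 ∧ y ∈ (C i).2) :
    (n.choose (2 * k) : ℝ) / ((n - k).choose k : ℝ) ^ 2 ≤ (t : ℝ) ^ 2 := by
  classical
  set M := (n - k).choose k with hMdef
  have hMpos : 0 < M := Nat.choose_pos (by omega)
  -- splitting a 2k-set into a disjoint edge
  have split : ∀ z : Finset (Fin n), z.card = 2 * k →
      ∃ x y : kSubsets n k, Disjoint x.1 y.1 ∧ x.1 ∪ y.1 = z := by
    intro z hz
    obtain ⟨x, hxz, hx⟩ := Finset.exists_subset_card_eq (show k ≤ z.card by omega)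
    refine ⟨⟨x, hx⟩, ⟨z \ x, ?_⟩, Finset.disjoint_sdiff, Finset.union_sdiff_of_subset hxz⟩
    rw [Finset.card_sdiff_of_subset hxz, hz, hx]; omega
  -- t is positive, and witnesses
  obtain ⟨z₀, hz₀sub, hz₀⟩ := Finset.exists_subset_card_eq
    (show 2 * k ≤ (Finset.univ : Finset (Fin n)).card by simpa using hkn)
  obtain ⟨x₀, y₀', hd₀, -⟩ := split z₀ hz₀
  obtain ⟨i₀, -, -⟩ := hcov x₀ y₀' hd₀
  have ht : 0 < t := i₀.pos
  have : Nonempty (Fin t × kSubsets n k × kSubsets n k) := ⟨(i₀, x₀, y₀')⟩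
  -- per-biclique bounds
  have hb1 : ∀ i, ((C i).2).Nonempty → ((C i).1).card ≤ M := by
    rintro i ⟨y₀, hy₀⟩
    have hcard : ((Finset.univ \ y₀.1).powersetCard k).card = M := by
      rw [Finset.card_powersetCard, Finset.card_sdiff_of_subset (Finset.subset_univ _)]
      simp [y₀.2, hMdef]
    calc ((C i).1).card ≤ ((Finset.univ \ y₀.1).powersetCard k).card := by
          apply Finset.card_le_card_of_injOn (fun x => x.1)
          · intro x hx
            simp only [Finset.mem_coe, Finset.mem_powersetCard]
            refine ⟨fun a ha => ?_, x.2⟩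
            simp only [Finset.mem_sdiff, Finset.mem_univ, true_and]
            exact Finset.disjoint_left.mp (hbic i x hx y₀ hy₀) ha
          · intro a _ b _ h; exact Subtype.ext h
      _ = M := hcard
  have hb2 : ∀ i, ((C i).1).Nonempty → ((C i).2).card ≤ M := by
    rintro i ⟨x₀, hx₀⟩
    have hcard : ((Finset.univ \ x₀.1).powersetCard k).card = M := by
      rw [Finset.card_powersetCard, Finset.card_sdiff_of_subset (Finset.subset_univ _)]
      simp [x₀.2, hMdef]
    calc ((C i).2).card ≤ ((Finset.univ \ x₀.1).powersetCard k).card := by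
          apply Finset.card_le_card_of_injOn (fun y => y.1)
          · intro y hy
            simp only [Finset.mem_coe, Finset.mem_powersetCard]
            refine ⟨fun a ha => ?_, y.2⟩
            simp only [Finset.mem_sdiff, Finset.mem_univ, true_and]
            exact Finset.disjoint_right.mp (hbic i x₀ hx₀ y hy) ha
          · intro a _ b _ h; exact Subtype.ext h
      _ = M := hcard
  have hprod : ∀ i : Fin t, ((C i).1).card * ((C i).2).card ≤ M * M := by
    intro i
    rcases Finset.eq_empty_or_nonempty (C i).1 with h1 | h1
    · simp [h1]
    rcases Finset.eq_empty_or_nonempty (C i).2 with h2 | h2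
    · simp [h2]
    exact Nat.mul_le_mul (hb1 i h2) (hb2 i h1)
  -- the big union
  set B : Finset (Fin t × kSubsets n k × kSubsets n k) :=
    Finset.univ.biUnion (fun i : Fin t => {i} ×ˢ (C i).1 ×ˢ (C i).2) with hBdef
  have hBcard : B.card ≤ t * (M * M) := by
    calc B.card ≤ ∑ i : Fin t, ({i} ×ˢ (C i).1 ×ˢ (C i).2).card :=
          Finset.card_biUnion_le
      _ ≤ ∑ _i : Fin t, M * M := by
          apply Finset.sum_le_sum
          intro i _
          rw [Finset.card_product, Finset.card_product, Finset.card_singleton, one_mul]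
          exact hprod i
      _ = t * (M * M) := by simp [Finset.sum_const, Finset.card_univ]
  -- injection from 2k-subsets into B
  have hZB : n.choose (2 * k) ≤ B.card := by
    have hZ : ((Finset.univ : Finset (Fin n)).powersetCard (2 * k)).card = n.choose (2 * k) := by
      rw [Finset.card_powersetCard]; simp
    rw [← hZ]
    have hg : ∀ z ∈ (Finset.univ : Finset (Fin n)).powersetCard (2 * k),
        ∃ p : Fin t × kSubsets n k × kSubsets n k,
          p ∈ B ∧ p.2.1.1 ∪ p.2.2.1 = z := by
      intro z hz
      rw [Finset.mem_powersetCard] at hz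
      obtain ⟨x, y, hd, hxy⟩ := split z hz.2
      obtain ⟨i, hx, hy⟩ := hcov x y hd
      refine ⟨(i, x, y), ?_, hxy⟩
      rw [hBdef, Finset.mem_biUnion]
      exact ⟨i, Finset.mem_univ i, by simp [hx, hy]⟩
    choose g hgB hgz using hg
    apply Finset.card_le_card_of_injOn (fun z => if h : z ∈ (Finset.univ : Finset (Fin n)).powersetCard (2 * k) then g z h else Classical.arbitrary _)
    · intro z hz; simp only [Finset.mem_coe] at hz ⊢; simp only [dif_pos hz]; exact hgB z hz
    · intro z₁ h₁ z₂ h₂ h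
      simp only [Finset.mem_coe] at h₁ h₂
      simp only [dif_pos h₁, dif_pos h₂] at h
      have e1 := hgz z₁ h₁
      have e2 := hgz z₂ h₂
      rw [← e1, ← e2, h]
  have hnat : n.choose (2 * k) ≤ t ^ 2 * M ^ 2 := by
    calc n.choose (2 * k) ≤ t * (M * M) := le_trans hZB hBcard
      _ ≤ t ^ 2 * M ^ 2 := by nlinarith [ht]
  rw [div_le_iff₀ (by positivity : (0:ℝ) < ((n - k).choose k : ℝ) ^ 2)]
  calc (n.choose (2 * k) : ℝ) ≤ ((t ^ 2 * M ^ 2 : ℕ) : ℝ) := by exact_mod_cast hnat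
    _ = (t : ℝ) ^ 2 * ((n - k).choose k : ℝ) ^ 2 := by push_cast [hMdef]; ring
end

section
/- Let n, k be positive integers with 2k ≤ n, and let G_{n,k} be the bipartite graph whose left and right vertex sets are both the collection of k-element subsets of {1, …, n}, with an edge between x and y exactly when x and y are disjoint. Then the biclique covering number satisfies bcc(G_{n,k}) ≥ C(2k, k). In particular, every biclique of G_{n,k} contains at most one edge (x,y) with any given union x ∪ y = a. -/
open Finset

/-- Key uniqueness: two edges of a biclique with the same union coincide. -/
lemma key_unique {n k : ℕ} (x y x' y' : kSubsets n k)
    (hxy' : Disjoint x.1 y'.1) (hx'y : Disjoint x'.1 y.1)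
    (hu : x.1 ∪ y.1 = x'.1 ∪ y'.1) : x = x' ∧ y = y' := by
  have hx : x.1 ⊆ x'.1 := by
    intro e he
    have : e ∈ x'.1 ∪ y'.1 := hu ▸ (mem_union_left _ he)
    rcases mem_union.1 this with h | h
    · exact h
    · exact absurd h (Finset.disjoint_left.1 hxy' he)
  have hy : y.1 ⊆ y'.1 := by
    intro e he
    have : e ∈ x'.1 ∪ y'.1 := hu ▸ (mem_union_right _ he)
    rcases mem_union.1 this with h | h
    · exact absurd he (Finset.disjoint_left.1 hx'y h)
    · exact h
  constructor
  · exact Subtype.ext (Finset.eq_of_subset_of_card_le hx (by rw [x.2, x'.2]))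
  · exact Subtype.ext (Finset.eq_of_subset_of_card_le hy (by rw [y.2, y'.2]))

/-- The biclique covering number of the disjointness graph `G_{n,k}` is at least
`C(2k,k)`: every covering of the edges (disjoint pairs) by `t` bicliques has
`t ≥ C(2k,k)`. In particular, every biclique of `G_{n,k}` contains at most one edge
`(x,y)` with any given union `x ∪ y`. -/
theorem stmt_19 (n k : ℕ) (hk : 0 < k) (hkn : 2 * k ≤ n) :
    (∀ (t : ℕ) (C : Fin t → Finset (kSubsets n k) × Finset (kSubsets n k)),
      (∀ i, ∀ x ∈ (C i).1, ∀ y ∈ (C i).2, Disjoint x.1 y.1) →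
      (∀ x y : kSubsets n k, Disjoint x.1 y.1 →
        ∃ i, x ∈ (C i).1 ∧ y ∈ (C i).2) →
      (2 * k).choose k ≤ t) ∧
    (∀ S₁ S₂ : Finset (kSubsets n k),
      (∀ x ∈ S₁, ∀ y ∈ S₂, Disjoint x.1 y.1) →
      ∀ x ∈ S₁, ∀ y ∈ S₂, ∀ x' ∈ S₁, ∀ y' ∈ S₂,
        x.1 ∪ y.1 = x'.1 ∪ y'.1 → x = x' ∧ y = y') := by
  classical
  constructor
  · intro t C hbic hcov
    obtain ⟨a, -, ha⟩ := Finset.exists_subset_card_eq (s := (univ : Finset (Fin n))) (n := 2 * k)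
      (by simpa using hkn)
    -- complement cardinality
    have hcompl : ∀ s ⊆ a, s.card = k → (a \ s).card = k := by
      intro s hs hsc
      rw [card_sdiff_of_subset hs, ha, hsc]; omega
    -- each k-subset s of a gives an edge (s, a\s) covered by some biclique
    have hex : ∀ s ∈ a.powersetCard k,
        ∃ i : Fin t, ∃ (hx : s.card = k) (hy : (a \ s).card = k),
          (⟨s, hx⟩ : kSubsets n k) ∈ (C i).1 ∧ (⟨a \ s, hy⟩ : kSubsets n k) ∈ (C i).2 := by
      intro s hs
      obtain ⟨hss, hsc⟩ := mem_powersetCard.1 hs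
      have hy := hcompl s hss hsc
      obtain ⟨i, h1, h2⟩ := hcov ⟨s, hsc⟩ ⟨a \ s, hy⟩ Finset.disjoint_sdiff
      exact ⟨i, hsc, hy, h1, h2⟩
    -- t > 0
    have hne : Nonempty (Fin t) := by
      obtain ⟨s, hss, hsc⟩ := Finset.exists_subset_card_eq (show k ≤ a.card by omega)
      obtain ⟨i, -⟩ := hex s (mem_powersetCard.2 ⟨hss, hsc⟩)
      exact ⟨i⟩
    -- the choice function
    let f : Finset (Fin n) → Fin t := fun s =>
      if h : ∃ i : Fin t, ∃ (hx : s.card = k) (hy : (a \ s).card = k),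
          (⟨s, hx⟩ : kSubsets n k) ∈ (C i).1 ∧ (⟨a \ s, hy⟩ : kSubsets n k) ∈ (C i).2
      then h.choose else Classical.arbitrary _
    have hf : ∀ s ∈ a.powersetCard k,
        ∃ (hx : s.card = k) (hy : (a \ s).card = k),
          (⟨s, hx⟩ : kSubsets n k) ∈ (C (f s)).1 ∧
          (⟨a \ s, hy⟩ : kSubsets n k) ∈ (C (f s)).2 := by
      intro s hs
      have h := hex s hs
      simp only [f, dif_pos h]
      exact h.choose_spec
    have hinj : Set.InjOn f (a.powersetCard k) := by
      intro s hs s' hs' heq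
      obtain ⟨hx, hy, h1, h2⟩ := hf s hs
      obtain ⟨hx', hy', h1', h2'⟩ := hf s' hs'
      rw [heq] at h1 h2
      have hu : s ∪ (a \ s) = s' ∪ (a \ s') := by
        rw [Finset.union_sdiff_of_subset (mem_powersetCard.1 hs).1,
          Finset.union_sdiff_of_subset (mem_powersetCard.1 hs').1]
      have := key_unique (⟨s, hx⟩ : kSubsets n k) ⟨a \ s, hy⟩ ⟨s', hx'⟩ ⟨a \ s', hy'⟩
        (hbic (f s') _ h1 _ h2') (hbic (f s') _ h1' _ h2) hu
      exact congrArg Subtype.val this.1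
    calc (2 * k).choose k = (a.powersetCard k).card := by
          rw [Finset.card_powersetCard, ha]
      _ ≤ (univ : Finset (Fin t)).card :=
          Finset.card_le_card_of_injOn f (fun s _ => mem_univ _) hinj
      _ = t := by simp
  · intro S₁ S₂ hbic x hx y hy x' hx' y' hy' hu
    exact key_unique x y x' y' (hbic x hx y' hy') (hbic x' hx' y hy) hu
end
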